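/- Every maximal beable subalgebra for a normal state on B(H) is weak-operator closed (a von Neumann algebra), and the weak-operator closure of any beable subalgebra for a normal state is again beable for that state. -/

import Mathlib

/-- The normal state `T ↦ Tr(KT)` associated to `K = ∑ₙ λₙ |eₙ⟩⟨eₙ|`. -/
noncomputable def trState {H : Type*} [NormedAddCommGroup H] [InnerProductSpace ℂ H]
    (e : ℕ → H) (lam : ℕ → ℝ) (T : H →L[ℂ] H) : ℂ :=
  ∑' n, (lam n : ℂ) * (inner ℂ (e n) (T (e n)) : ℂ)

/-- A set of operators is beable for the normal state determined by (e, lam) if the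
state vanishes on [A,B]*[A,B] for all A, B in the set. -/
noncomputable def IsBeable {H : Type*} [NormedAddCommGroup H] [InnerProductSpace ℂ H]
    [CompleteSpace H] (e : ℕ → H) (lam : ℕ → ℝ) (S : Set (H →L[ℂ] H)) : Prop :=
  ∀ a ∈ S, ∀ b ∈ S, trState e lam (star (a * b - b * a) * (a * b - b * a)) = 0

/-- The weak-operator-topology closure of a set of bounded operators. -/
noncomputable def wotClosure {H : Type*} [NormedAddCommGroup H] [InnerProductSpace ℂ H]
    [CompleteSpace H] (S : Set (H →L[ℂ] H)) : Set (H →L[ℂ] H) :=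
  {a | (ContinuousLinearMapWOT.ofCLM a : H →WOT[ℂ] H) ∈
    closure ((ContinuousLinearMapWOT.ofCLM : (H →L[ℂ] H) → (H →WOT[ℂ] H)) '' S)}

section Aux

variable {H : Type*} [NormedAddCommGroup H] [InnerProductSpace ℂ H] [CompleteSpace H]

local notation "W" => (ContinuousLinearMapWOT.ofCLM : (H →L[ℂ] H) → (H →WOT[ℂ] H))

lemma aux_inner_starmul (C : H →L[ℂ] H) (x : H) :
    (inner ℂ x ((star C * C) x) : ℂ) = ((‖C x‖ : ℂ)) ^ 2 := by
  rw [ContinuousLinearMap.mul_apply, ContinuousLinearMap.star_eq_adjoint,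
    ContinuousLinearMap.adjoint_inner_right]
  exact inner_self_eq_norm_sq_to_K (𝕜 := ℂ) _

lemma aux_trState_iff (e : ℕ → H) (he : Orthonormal ℂ e)
    (lam : ℕ → ℝ) (hlam : ∀ n, 0 ≤ lam n) (hsum : ∑' n, lam n = 1) (C : H →L[ℂ] H) :
    trState e lam (star C * C) = 0 ↔ ∀ n, lam n ≠ 0 → C (e n) = 0 := by
  have hterm : ∀ n, (lam n : ℂ) * (inner ℂ (e n) ((star C * C) (e n)) : ℂ)
      = ((lam n * ‖C (e n)‖ ^ 2 : ℝ) : ℂ) := by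
    intro n
    rw [aux_inner_starmul]
    push_cast
    ring
  constructor
  · intro h0 n hn
    have hS : Summable lam := by
      by_contra hs
      rw [tsum_eq_zero_of_not_summable hs] at hsum
      norm_num at hsum
    have hf : Summable (fun n => lam n * ‖C (e n)‖ ^ 2) := by
      refine Summable.of_nonneg_of_le (fun n => mul_nonneg (hlam n) (sq_nonneg _)) (fun n => ?_)
        (hS.mul_right (‖C‖ ^ 2))
      have h1 : ‖C (e n)‖ ≤ ‖C‖ := by
        simpa [he.1 n] using C.le_opNorm (e n)
      exact mul_le_mul_of_nonneg_left
        (pow_le_pow_left₀ (norm_nonneg _) h1 2) (hlam n)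
    have hsum0 : ∑' n, (lam n * ‖C (e n)‖ ^ 2) = 0 := by
      have hc : ((∑' n, (lam n * ‖C (e n)‖ ^ 2) : ℝ) : ℂ) = 0 := by
        rw [Complex.ofReal_tsum, ← h0]
        exact tsum_congr fun n => (hterm n).symm
      exact_mod_cast hc
    have hle := Summable.le_tsum hf n (fun m _ => mul_nonneg (hlam m) (sq_nonneg _))
    have hz : lam n * ‖C (e n)‖ ^ 2 = 0 :=
      le_antisymm (hsum0 ▸ hle) (mul_nonneg (hlam n) (sq_nonneg _))
    rcases mul_eq_zero.mp hz with h | h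
    · exact absurd h hn
    · have : ‖C (e n)‖ = 0 := by
        have := sq_eq_zero_iff.mp h
        simpa using this
      simpa using this
  · intro h
    unfold trState
    have hz : ∀ n, (lam n : ℂ) * (inner ℂ (e n) ((star C * C) (e n)) : ℂ) = 0 := by
      intro n
      by_cases hn : lam n = 0
      · simp [hn]
      · rw [hterm n, h n hn]
        simp
    simp only [hz]
    exact tsum_zero

lemma aux_self_subset (S : Set (H →L[ℂ] H)) : S ⊆ wotClosure S := fun a ha =>
  subset_closure ⟨a, ha, rfl⟩

lemma aux_cont_inner (x z : H) :
    Continuous fun T : H →WOT[ℂ] H => (inner ℂ x (T z) : ℂ) :=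
  ContinuousLinearMapWOT.continuous_dual_apply z (innerSL ℂ x)

lemma aux_closure_vanish {S : Set (H →L[ℂ] H)} {φ : (H →WOT[ℂ] H) → ℂ} (hφ : Continuous φ)
    (h : ∀ s ∈ S, φ (W s) = 0) {a : H →L[ℂ] H} (ha : a ∈ wotClosure S) : φ (W a) = 0 := by
  have hcl : closure (W '' S) ⊆ φ ⁻¹' {0} :=
    closure_minimal (by rintro _ ⟨s, hs, rfl⟩; exact h s hs)
      (isClosed_singleton.preimage hφ)
  exact hcl ha

lemma aux_comm_closure {S : Set (H →L[ℂ] H)} (v : H)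
    (hS : ∀ a ∈ S, ∀ b ∈ S, (a * b - b * a) v = 0) :
    ∀ a ∈ wotClosure S, ∀ b ∈ wotClosure S, (a * b - b * a) v = 0 := by
  have step1 : ∀ b ∈ S, ∀ a ∈ wotClosure S, (a * b - b * a) v = 0 := by
    intro b hb a ha
    have key : ∀ x : H, (inner ℂ x ((a * b - b * a) v) : ℂ) = 0 := by
      intro x
      have hφ : Continuous (fun T : H →WOT[ℂ] H =>
          (inner ℂ x (T (b v)) : ℂ) - (inner ℂ ((ContinuousLinearMap.adjoint b) x) (T v) : ℂ)) :=
        (aux_cont_inner x (b v)).sub (aux_cont_inner _ v)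
      have hvan := aux_closure_vanish hφ (fun s hs => ?_) ha
      · have heq : (inner ℂ x ((a * b - b * a) v) : ℂ)
            = (inner ℂ x ((W a) (b v)) : ℂ)
              - (inner ℂ ((ContinuousLinearMap.adjoint b) x) ((W a) v) : ℂ) := by
          simp only [ContinuousLinearMap.toWOT_apply, ContinuousLinearMap.sub_apply,
            ContinuousLinearMap.mul_apply, inner_sub_right,
            ContinuousLinearMap.adjoint_inner_left]
        rw [heq]
        exact hvan
      · have h0 : (s * b - b * s) v = 0 := hS s hs b hb
        have : (inner ℂ x (s (b v)) : ℂ) - (inner ℂ x (b (s v)) : ℂ) = 0 := by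
          rw [← inner_sub_right]
          have : s (b v) - b (s v) = 0 := by
            simpa [ContinuousLinearMap.sub_apply, ContinuousLinearMap.mul_apply,
              sub_eq_zero] using h0
          rw [this, inner_zero_right]
        simpa only [ContinuousLinearMap.toWOT_apply,
          ContinuousLinearMap.adjoint_inner_left] using this
    have := key ((a * b - b * a) v)
    exact inner_self_eq_zero.mp this
  intro a ha b hb
  have key : ∀ x : H, (inner ℂ x ((a * b - b * a) v) : ℂ) = 0 := by
    intro x
    have hφ : Continuous (fun T : H →WOT[ℂ] H =>
        (inner ℂ ((ContinuousLinearMap.adjoint a) x) (T v) : ℂ) - (inner ℂ x (T (a v)) : ℂ)) :=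
      (aux_cont_inner _ v).sub (aux_cont_inner x (a v))
    have hvan := aux_closure_vanish hφ (fun s hs => ?_) hb
    · have heq : (inner ℂ x ((a * b - b * a) v) : ℂ)
          = (inner ℂ ((ContinuousLinearMap.adjoint a) x) ((W b) v) : ℂ)
            - (inner ℂ x ((W b) (a v)) : ℂ) := by
        simp only [ContinuousLinearMap.toWOT_apply, ContinuousLinearMap.sub_apply,
          ContinuousLinearMap.mul_apply, inner_sub_right,
          ContinuousLinearMap.adjoint_inner_left]
      rw [heq]
      exact hvan
    · have h0 : (a * s - s * a) v = 0 := step1 s hs a ha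
      have h0' : a (s v) - s (a v) = 0 := by
        simpa [ContinuousLinearMap.sub_apply, ContinuousLinearMap.mul_apply,
          sub_eq_zero] using h0
      have : (inner ℂ x (a (s v)) : ℂ) - (inner ℂ x (s (a v)) : ℂ) = 0 := by
        rw [← inner_sub_right, h0', inner_zero_right]
      simpa only [ContinuousLinearMap.toWOT_apply,
        ContinuousLinearMap.adjoint_inner_left] using this
  exact inner_self_eq_zero.mp (key ((a * b - b * a) v))

lemma aux_map_mem {S : Set (H →L[ℂ] H)} (g : (H →L[ℂ] H) → (H →L[ℂ] H))
    (hg : Continuous fun T : H →WOT[ℂ] H => W (g (ContinuousLinearMapWOT.toCLM T)))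
    (hmem : ∀ s ∈ S, g s ∈ wotClosure S) {a : H →L[ℂ] H} (ha : a ∈ wotClosure S) :
    g a ∈ wotClosure S := by
  have hsub : closure (W '' S) ⊆
      (fun T => W (g (ContinuousLinearMapWOT.toCLM T))) ⁻¹' closure (W '' S) := by
    refine closure_minimal ?_ (isClosed_closure.preimage hg)
    rintro _ ⟨s, hs, rfl⟩
    exact hmem s hs
  exact hsub ha

lemma aux_mul_mem {S : Set (H →L[ℂ] H)} (hmul : ∀ s ∈ S, ∀ t ∈ S, s * t ∈ S)
    {a b : H →L[ℂ] H} (ha : a ∈ wotClosure S) (hb : b ∈ wotClosure S) :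
    a * b ∈ wotClosure S := by
  have step1 : ∀ t ∈ S, ∀ a' ∈ wotClosure S, a' * t ∈ wotClosure S := by
    intro t ht a' ha'
    refine aux_map_mem (fun s => s * t) ?_ (fun s hs => aux_self_subset S (hmul s hs t ht)) ha'
    exact ContinuousLinearMapWOT.continuous_of_dual_apply_continuous fun z y =>
      ContinuousLinearMapWOT.continuous_dual_apply (t z) y
  refine aux_map_mem (fun s => a * s) ?_ (fun s hs => step1 s hs a ha) hb
  exact ContinuousLinearMapWOT.continuous_of_dual_apply_continuous fun z y =>
    ContinuousLinearMapWOT.continuous_dual_apply z (y.comp a)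

lemma aux_add_mem {S : Set (H →L[ℂ] H)} (hadd : ∀ s ∈ S, ∀ t ∈ S, s + t ∈ S)
    {a b : H →L[ℂ] H} (ha : a ∈ wotClosure S) (hb : b ∈ wotClosure S) :
    a + b ∈ wotClosure S := by
  have step1 : ∀ t ∈ S, ∀ a' ∈ wotClosure S, a' + t ∈ wotClosure S := by
    intro t ht a' ha'
    refine aux_map_mem (fun s => s + t) ?_ (fun s hs => aux_self_subset S (hadd s hs t ht)) ha'
    have hfe : (fun T : H →WOT[ℂ] H => W ((ContinuousLinearMapWOT.toCLM T) + t))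
        = fun T => T + W t := by
      funext T
      rfl
    rw [hfe]
    exact continuous_add_right _
  refine aux_map_mem (fun s => a + s) ?_ (fun s hs => step1 s hs a ha) hb
  have hfe : (fun T : H →WOT[ℂ] H => W (a + (ContinuousLinearMapWOT.toCLM T)))
      = fun T => W a + T := by
    funext T
    rfl
  rw [hfe]
  exact continuous_add_left _

lemma aux_star_mem {S : Set (H →L[ℂ] H)} (hstar : ∀ s ∈ S, star s ∈ S)
    {a : H →L[ℂ] H} (ha : a ∈ wotClosure S) : star a ∈ wotClosure S := by
  refine aux_map_mem (fun s => star s) ?_ (fun s hs => aux_self_subset S (hstar s hs)) ha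
  refine ContinuousLinearMapWOT.continuous_of_dual_apply_continuous fun z y => ?_
  set w := (InnerProductSpace.toDual ℂ H).symm y with hw
  have hfe : (fun T : H →WOT[ℂ] H =>
      y ((W (star (ContinuousLinearMapWOT.toCLM T))) z))
      = fun T => (starRingEnd ℂ) (inner ℂ z (T w) : ℂ) := by
    funext T
    have h1 : y ((star (ContinuousLinearMapWOT.toCLM T)) z)
        = (inner ℂ w ((star (ContinuousLinearMapWOT.toCLM T)) z) : ℂ) := by
      rw [hw, InnerProductSpace.toDual_symm_apply]
    rw [ContinuousLinearMap.toWOT_apply, h1, ContinuousLinearMap.star_eq_adjoint,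
      ContinuousLinearMap.adjoint_inner_right, ← inner_conj_symm]
    rfl
  rw [hfe]
  exact Complex.continuous_conj.comp (aux_cont_inner z w)

/-- The WOT closure of a star subalgebra, as a star subalgebra. -/
noncomputable def auxClosureAlg (𝔅 : StarSubalgebra ℂ (H →L[ℂ] H)) :
    StarSubalgebra ℂ (H →L[ℂ] H) where
  carrier := wotClosure (𝔅 : Set (H →L[ℂ] H))
  mul_mem' := fun ha hb => aux_mul_mem (fun s hs t ht => mul_mem hs ht) ha hb
  add_mem' := fun ha hb => aux_add_mem (fun s hs t ht => add_mem hs ht) ha hb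
  one_mem' := aux_self_subset _ (one_mem 𝔅)
  zero_mem' := aux_self_subset _ (zero_mem 𝔅)
  algebraMap_mem' := fun r => aux_self_subset _ (algebraMap_mem 𝔅 r)
  star_mem' := fun ha => aux_star_mem (fun s hs => star_mem hs) ha

lemma aux_beable_closure (e : ℕ → H) (he : Orthonormal ℂ e)
    (lam : ℕ → ℝ) (hlam : ∀ n, 0 ≤ lam n) (hsum : ∑' n, lam n = 1)
    (S : Set (H →L[ℂ] H)) (hS : IsBeable e lam S) :
    IsBeable e lam (wotClosure S) := by
  intro a ha b hb
  rw [aux_trState_iff e he lam hlam hsum]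
  intro n hn
  have hptwise : ∀ a' ∈ S, ∀ b' ∈ S, (a' * b' - b' * a') (e n) = 0 := by
    intro a' ha' b' hb'
    exact (aux_trState_iff e he lam hlam hsum _).mp (hS a' ha' b' hb') n hn
  exact aux_comm_closure (e n) hptwise a ha b hb

end Aux

/-- For a normal state ρ on B(H) (given by a positive trace-one operator via (e, lam)):
(i) every maximal beable unital C*-subalgebra is weak-operator closed, and
(ii) the weak-operator closure of any beable subalgebra is again beable for ρ. -/
theorem stmt_12 {H : Type*} [NormedAddCommGroup H] [InnerProductSpace ℂ H] [CompleteSpace H]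
    (e : ℕ → H) (he : Orthonormal ℂ e)
    (lam : ℕ → ℝ) (hlam : ∀ n, 0 ≤ lam n) (hsum : ∑' n, lam n = 1) :
    (∀ 𝔅 : StarSubalgebra ℂ (H →L[ℂ] H),
      IsBeable e lam (𝔅 : Set (H →L[ℂ] H)) →
      (∀ C : StarSubalgebra ℂ (H →L[ℂ] H),
        IsBeable e lam (C : Set (H →L[ℂ] H)) → 𝔅 ≤ C → C = 𝔅) →
      wotClosure (𝔅 : Set (H →L[ℂ] H)) = (𝔅 : Set (H →L[ℂ] H))) ∧
    (∀ 𝔅 : StarSubalgebra ℂ (H →L[ℂ] H),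
      IsBeable e lam (𝔅 : Set (H →L[ℂ] H)) →
      IsBeable e lam (wotClosure (𝔅 : Set (H →L[ℂ] H)))) := by
  constructor
  · intro 𝔅 hB hmax
    have hCbeable : IsBeable e lam ((auxClosureAlg 𝔅 : StarSubalgebra ℂ (H →L[ℂ] H)) :
        Set (H →L[ℂ] H)) := by
      have : ((auxClosureAlg 𝔅 : StarSubalgebra ℂ (H →L[ℂ] H)) : Set (H →L[ℂ] H))
          = wotClosure (𝔅 : Set (H →L[ℂ] H)) := rfl
      rw [this]
      exact aux_beable_closure e he lam hlam hsum _ hB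
    have hle : 𝔅 ≤ auxClosureAlg 𝔅 := fun x hx => aux_self_subset _ hx
    have hEq := hmax (auxClosureAlg 𝔅) hCbeable hle
    calc wotClosure (𝔅 : Set (H →L[ℂ] H))
        = ((auxClosureAlg 𝔅 : StarSubalgebra ℂ (H →L[ℂ] H)) : Set (H →L[ℂ] H)) := rfl
      _ = (𝔅 : Set (H →L[ℂ] H)) := by rw [hEq]
  · intro 𝔅 hB
    exact aux_beable_closure e he lam hlam hsum _ hB
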